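/- If S is an n×n row-stochastic matrix such that some power S^k has all entries strictly positive, then every eigenvalue λ of S with λ ≠ 1 satisfies |λ| < 1. -/

import Mathlib

open Matrix Polynomial

/-- If some power of a row-stochastic matrix is entrywise strictly positive, then every
eigenvalue other than 1 has modulus strictly less than 1. -/
theorem stmt3 {n : ℕ} (S : Matrix (Fin n) (Fin n) ℝ)
    (hpos : ∀ i j, 0 ≤ S i j) (hrow : ∀ i, ∑ j, S i j = 1)
    (k : ℕ) (hk : 0 < k) (hpow : ∀ i j, 0 < (S ^ k) i j) :
    ∀ μ : ℂ, (S.map Complex.ofReal).charpoly.IsRoot μ → μ ≠ 1 → ‖μ‖ < 1 := by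
  intro μ hroot hne
  by_contra hcon
  push_neg at hcon
  set T := S.map Complex.ofReal with hT
  -- get an eigenvector
  obtain ⟨v, hv, hTv⟩ : ∃ v ≠ 0, T.mulVec v = μ • v := by
    have hdet : (Matrix.scalar (Fin n) μ - T).det = 0 := by
      have h := hroot
      rw [Polynomial.IsRoot, Matrix.charpoly, eval_det, matPolyEquiv_charmatrix] at h
      simpa using h
    obtain ⟨v, hv, hmv⟩ := (Matrix.exists_mulVec_eq_zero_iff).2 hdet
    refine ⟨v, hv, ?_⟩
    rw [Matrix.sub_mulVec] at hmv
    have h2 : (Matrix.scalar (Fin n) μ).mulVec v = μ • v := by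
      ext j
      simp [Matrix.scalar, Matrix.mulVec_diagonal, Pi.algebraMap_apply, Algebra.algebraMap_self_apply]
    rw [h2, sub_eq_zero] at hmv
    exact hmv.symm
  -- eigenvector of T ^ k
  have hTk : ∀ m : ℕ, (T ^ m).mulVec v = μ ^ m • v := by
    intro m
    induction m with
    | zero => simp
    | succ m ih =>
      rw [pow_succ', pow_succ', ← Matrix.mulVec_mulVec, ih, Matrix.mulVec_smul, hTv,
        smul_smul, mul_comm]
  have hmapk : T ^ k = (S ^ k).map Complex.ofReal := by
    have : T = (Complex.ofRealHom).mapMatrix S := rfl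
    rw [this, ← map_pow]
    rfl
  -- pick coordinate of maximal modulus
  have hne' : Nonempty (Fin n) := by
    by_contra h
    exact hv (funext fun i => absurd ⟨i⟩ h)
  obtain ⟨i, -, hi⟩ := Finset.exists_max_image Finset.univ (fun j => ‖v j‖)
    ⟨Classical.arbitrary (Fin n), Finset.mem_univ _⟩
  set M := ‖v i‖ with hMdef
  have hM : 0 < M := by
    obtain ⟨j, hj⟩ := Function.ne_iff.mp hv
    have : 0 < ‖v j‖ := by simpa using hj
    exact lt_of_lt_of_le this (hi j (Finset.mem_univ j))
  set a : Fin n → ℝ := fun j => (S ^ k) i j with ha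
  have hapos : ∀ j, 0 < a j := fun j => hpow i j
  -- row sums of powers are 1
  have hrowm : ∀ m : ℕ, ∀ i', ∑ j, (S ^ m) i' j = 1 := by
    intro m
    induction m with
    | zero => intro i'; simp [Matrix.one_apply, Finset.sum_ite_eq]
    | succ m ih =>
      intro i'
      rw [pow_succ]
      simp only [Matrix.mul_apply]
      rw [Finset.sum_comm]
      calc ∑ l, ∑ j, (S ^ m) i' l * S l j
          = ∑ l, (S ^ m) i' l * ∑ j, S l j := by simp [Finset.mul_sum]
        _ = 1 := by simp [hrow, ih]
  have hasum : ∑ j, a j = 1 := hrowm k i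
  -- key equation
  have key : ∑ j, (a j : ℂ) * v j = μ ^ k * v i := by
    have := congrFun (hTk k) i
    rw [hmapk] at this
    simpa [Matrix.mulVec, dotProduct, Matrix.map_apply, ha] using this
  -- |μ| = 1
  have habsle : ‖μ ^ k‖ * M ≤ M := by
    calc ‖μ ^ k‖ * M = ‖∑ j, (a j : ℂ) * v j‖ := by
          rw [key, norm_mul]
      _ ≤ ∑ j, ‖(a j : ℂ) * v j‖ := by
          exact norm_sum_le _ _
      _ ≤ ∑ j, a j * M := by
          apply Finset.sum_le_sum
          intro j _
          rw [norm_mul, Complex.norm_real, Real.norm_eq_abs, abs_of_pos (hapos j)]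
          exact mul_le_mul_of_nonneg_left (hi j (Finset.mem_univ j)) (hapos j).le
      _ = M := by rw [← Finset.sum_mul, hasum, one_mul]
  have hμk : ‖μ ^ k‖ = 1 := by
    have h1 : (1 : ℝ) ≤ ‖μ ^ k‖ := by
      rw [norm_pow]; exact one_le_pow₀ hcon
    have h2 : ‖μ ^ k‖ ≤ 1 := by
      nlinarith [habsle, hM]
    linarith
  have hμ1 : ‖μ‖ = 1 := le_antisymm (by
    by_contra h
    push_neg at h
    have : (1 : ℝ) < ‖μ ^ k‖ := by
      rw [norm_pow]; exact one_lt_pow₀ h hk.ne'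
    linarith [hμk]) hcon
  set c := μ ^ k * v i with hc
  have hcabs : ‖c‖ = M := by
    rw [hc, norm_mul, hμk, one_mul]
  have hcne : c ≠ 0 := by
    intro h
    rw [h, norm_zero] at hcabs
    linarith
  -- equality analysis: each v j = c
  have hre : ∀ j, ((starRingEnd ℂ) c * v j).re = M ^ 2 := by
    have hsum : ∑ j, a j * ((starRingEnd ℂ) c * v j).re = M ^ 2 := by
      have h1 : ((starRingEnd ℂ) c * ∑ j, (a j : ℂ) * v j).re = M ^ 2 := by
        rw [key, mul_comm, Complex.mul_conj]
        norm_cast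
        rw [Complex.normSq_eq_norm_sq, hcabs]
      rw [Finset.mul_sum] at h1
      rw [← h1, Complex.re_sum]
      apply Finset.sum_congr rfl
      intro j _
      rw [mul_left_comm, Complex.re_ofReal_mul]
    have hle : ∀ j ∈ Finset.univ, a j * ((starRingEnd ℂ) c * v j).re ≤ a j * M ^ 2 := by
      intro j _
      apply mul_le_mul_of_nonneg_left _ (hapos j).le
      calc ((starRingEnd ℂ) c * v j).re ≤ ‖(starRingEnd ℂ) c * v j‖ := Complex.re_le_norm _
        _ = M * ‖v j‖ := by rw [norm_mul, Complex.norm_conj, hcabs]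
        _ ≤ M * M := mul_le_mul_of_nonneg_left (hi j (Finset.mem_univ j)) hM.le
        _ = M ^ 2 := (sq M).symm
    have hsum2 : ∑ j, a j * M ^ 2 = M ^ 2 := by
      rw [← Finset.sum_mul, hasum, one_mul]
    intro j
    by_contra hne2
    have hlt : a j * ((starRingEnd ℂ) c * v j).re < a j * M ^ 2 := by
      apply (mul_lt_mul_iff_right₀ (hapos j)).2
      exact lt_of_le_of_ne (by
        have := hle j (Finset.mem_univ j)
        exact le_of_mul_le_mul_left this (hapos j)) hne2
    have : ∑ j, a j * ((starRingEnd ℂ) c * v j).re < ∑ j, a j * M ^ 2 :=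
      Finset.sum_lt_sum hle ⟨j, Finset.mem_univ j, hlt⟩
    rw [hsum, hsum2] at this
    exact lt_irrefl _ this
  have hvj : ∀ j, v j = c := by
    intro j
    set z := (starRingEnd ℂ) c * v j with hz
    have hzre : z.re = M ^ 2 := hre j
    have hzabs : ‖z‖ ≤ M ^ 2 := by
      rw [hz, norm_mul, Complex.norm_conj, hcabs, sq]
      exact mul_le_mul_of_nonneg_left (hi j (Finset.mem_univ j)) hM.le
    have him : z.im = 0 := by
      have h1 : z.re ^ 2 + z.im ^ 2 = ‖z‖ ^ 2 := by
        rw [Complex.sq_norm, Complex.normSq_apply]; ring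
      nlinarith [hzabs, hzre, norm_nonneg z, sq_nonneg z.im, sq_nonneg M]
    have hzeq : z = ((M ^ 2 : ℝ) : ℂ) := by
      apply Complex.ext <;> simp [hzre, him, ← Complex.ofReal_pow]
    have hMc : ((M ^ 2 : ℝ) : ℂ) = (starRingEnd ℂ) c * c := by
      rw [mul_comm, Complex.mul_conj]
      norm_cast
      rw [Complex.normSq_eq_norm_sq, hcabs]
    have : (starRingEnd ℂ) c * v j = (starRingEnd ℂ) c * c := by rw [← hz, hzeq, hMc]
    exact mul_left_cancel₀ (by simpa using hcne) this
  -- conclude μ = 1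
  have hfin : c = μ * c := by
    have := congrFun hTv i
    simp only [Pi.smul_apply, smul_eq_mul] at this
    rw [hvj i] at this
    have hlhs : (T.mulVec v) i = c := by
      simp only [Matrix.mulVec, dotProduct, hT, Matrix.map_apply]
      calc ∑ j, (Complex.ofReal (S i j)) * v j = ∑ j, (Complex.ofReal (S i j)) * c := by
            apply Finset.sum_congr rfl; intro j _; rw [hvj j]
        _ = (∑ j, (Complex.ofReal (S i j))) * c := by rw [Finset.sum_mul]
        _ = c := by
            norm_cast
            rw [hrow i, Complex.ofReal_one, one_mul]
    rw [hlhs] at this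
    exact this
  exact hne (mul_right_cancel₀ hcne (by rw [one_mul]; exact hfin)).symm
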